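/- If R is Noetherian, then for every reachability submodule U of M there exists h ∈ 𝓜 = ker[yE-A,-B] ∩ (M[y] × R[y]^m) such that U = U_{π(h)}, the submodule generated by the coefficient vectors of the first component of h. -/

import Mathlib

open Matrix

variable {R : Type*} [CommRing R] {n m : ℕ}

/-- `U` is `(A,B)`-invariant: `A·U ⊆ U + im B`. -/
def ABInvariant (A : Matrix (Fin n) (Fin n) R) (B : Matrix (Fin n) (Fin m) R)
    (U : Submodule R (Fin n → R)) : Prop :=
  ∀ x ∈ U, A.mulVec x ∈ U ⊔ LinearMap.range B.mulVecLin

/-- `x` is reached from `0` at time `r` by a trajectory staying in `U`. -/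
def ABReached (A : Matrix (Fin n) (Fin n) R) (B : Matrix (Fin n) (Fin m) R)
    (U : Submodule R (Fin n → R)) (x : Fin n → R) (r : ℕ) : Prop :=
  ∃ (u : ℕ → Fin m → R) (xs : ℕ → Fin n → R),
    xs 0 = 0 ∧ (∀ k, xs (k + 1) = A.mulVec (xs k) + B.mulVec (u k)) ∧
    (∀ k, 1 ≤ k → k ≤ r → xs k ∈ U) ∧ xs r = x

/-- `U` is a reachability submodule. -/
def ABReachability (A : Matrix (Fin n) (Fin n) R) (B : Matrix (Fin n) (Fin m) R)
    (U : Submodule R (Fin n → R)) : Prop :=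
  ABInvariant A B U ∧ ∀ x ∈ U, ∃ r, ABReached A B U x r

open Polynomial

/-- The `k`-th coefficient vector of a polynomial vector. -/
def coeffVec (f : Fin n → R[X]) (k : ℕ) : Fin n → R := fun i => (f i).coeff k

/-- The `R`-submodule generated by the coefficient vectors of `f`. -/
def Uf (f : Fin n → R[X]) : Submodule R (Fin n → R) :=
  Submodule.span R (Set.range (coeffVec f))

/-- The kernel condition `(yE - A) f = B g`. -/
def kerCond (A : Matrix (Fin n) (Fin n) R) (B : Matrix (Fin n) (Fin m) R)
    (f : Fin n → R[X]) (g : Fin m → R[X]) : Prop :=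
  ((X : R[X]) • (1 : Matrix (Fin n) (Fin n) R[X]) - A.map C).mulVec f = (B.map C).mulVec g

/-- The module `𝓜 = ker[yE-A,-B] ∩ (M[y] × R[y]^m)`. -/
def scrM (A : Matrix (Fin n) (Fin n) R) (B : Matrix (Fin n) (Fin m) R)
    (M : Submodule R (Fin n → R)) : Set ((Fin n → R[X]) × (Fin m → R[X])) :=
  {p | kerCond A B p.1 p.2 ∧ ∀ k, coeffVec p.1 k ∈ M}

/- ### Auxiliary development -/

/-- A finite trajectory starting and ending at `0`, staying in `U`, padded by zeros. -/
def IsLoop (A : Matrix (Fin n) (Fin n) R) (B : Matrix (Fin n) (Fin m) R)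
    (U : Submodule R (Fin n → R)) (xs : ℕ → Fin n → R) (u : ℕ → Fin m → R) (r : ℕ) : Prop :=
  xs 0 = 0 ∧ (∀ k, xs (k + 1) = A.mulVec (xs k) + B.mulVec (u k)) ∧
    (∀ k, xs k ∈ U) ∧ (∀ k, r ≤ k → xs k = 0 ∧ u k = 0)

lemma isLoop_zero (A : Matrix (Fin n) (Fin n) R) (B : Matrix (Fin n) (Fin m) R)
    (U : Submodule R (Fin n → R)) : IsLoop A B U (fun _ => 0) (fun _ => 0) 0 := by
  refine ⟨rfl, fun k => ?_, fun k => U.zero_mem, fun k _ => ⟨rfl, rfl⟩⟩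
  simp [Matrix.mulVec_zero]

/-- Concatenation of loops. -/
lemma isLoop_concat {A : Matrix (Fin n) (Fin n) R} {B : Matrix (Fin n) (Fin m) R}
    {U : Submodule R (Fin n → R)} {xs ys u v r s} (hx : IsLoop A B U xs u r)
    (hy : IsLoop A B U ys v s) :
    ∃ zs w, IsLoop A B U zs w (r + s) ∧
      (∀ k, xs k ∈ Submodule.span R (Set.range zs)) ∧
      (∀ k, ys k ∈ Submodule.span R (Set.range zs)) := by
  obtain ⟨hx0, hxs, hxU, hxr⟩ := hx
  obtain ⟨hy0, hys, hyU, hyr⟩ := hy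
  refine ⟨fun k => xs k + ys (k - r), fun k => if k < r then u k else v (k - r), ⟨?_, ?_, ?_, ?_⟩, ?_, ?_⟩
  · simp [hx0, hy0]
  · intro k
    by_cases hk : k < r
    · have h1 : k + 1 - r = 0 := by omega
      have h2 : k - r = 0 := by omega
      simp only [h1, h2, hy0, if_pos hk, add_zero, hxs k]
    · have h1 : k + 1 - r = (k - r) + 1 := by omega
      have h2 : xs k = 0 := (hxr k (by omega)).1
      have h3 : xs (k + 1) = 0 := (hxr (k + 1) (by omega)).1
      simp only [h1, h2, h3, if_neg hk, zero_add, hys (k - r), Matrix.mulVec_zero]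
  · intro k; exact U.add_mem (hxU k) (hyU (k - r))
  · intro k hk
    have h2 : xs k = 0 := (hxr k (by omega)).1
    have h3 : ys (k - r) = 0 := (hyr (k - r) (by omega)).1
    have h4 : u k = 0 := (hxr k (by omega)).2
    have h5 : v (k - r) = 0 := (hyr (k - r) (by omega)).2
    constructor
    · simp [h2, h3]
    · by_cases hkr : k < r
      · simp [if_pos hkr, h4]
      · simp [if_neg hkr, h5]
  · intro k
    by_cases hk : k < r
    · have h2 : k - r = 0 := by omega
      have : xs k = xs k + ys (k - r) := by simp [h2, hy0]
      rw [this]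
      exact Submodule.subset_span ⟨k, rfl⟩
    · rw [(hxr k (by omega)).1]; exact Submodule.zero_mem _
  · intro k
    have h2 : xs (k + r) = 0 := (hxr (k + r) (by omega)).1
    have h3 : k + r - r = k := by omega
    have : ys k = xs (k + r) + ys (k + r - r) := by simp [h2, h3]
    rw [this]
    exact Submodule.subset_span ⟨k + r, rfl⟩

/-- From any point of an invariant submodule there is an infinite trajectory staying in `U`. -/
lemma exists_inv_traj {A : Matrix (Fin n) (Fin n) R} {B : Matrix (Fin n) (Fin m) R}
    {U : Submodule R (Fin n → R)} (hinv : ABInvariant A B U) (x : Fin n → R) (hx : x ∈ U) :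
    ∃ (xs : ℕ → Fin n → R) (u : ℕ → Fin m → R), xs 0 = x ∧
      (∀ k, xs (k + 1) = A.mulVec (xs k) + B.mulVec (u k)) ∧ ∀ k, xs k ∈ U := by
  have h : ∀ p : U, ∃ q : U × (Fin m → R),
      (q.1 : Fin n → R) = A.mulVec (p : Fin n → R) + B.mulVec q.2 := by
    rintro ⟨p, hp⟩
    have := hinv p hp
    rw [Submodule.mem_sup] at this
    obtain ⟨y, hy, z, hz, hyz⟩ := this
    obtain ⟨w, hw⟩ := hz
    refine ⟨⟨⟨y, hy⟩, -w⟩, ?_⟩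
    have hw' : B.mulVec w = z := by rw [← hw]; rfl
    show y = A.mulVec p + B.mulVec (-w)
    rw [Matrix.mulVec_neg, hw', ← hyz]
    abel
  choose step hstep using h
  let st : ℕ → U := fun k => Nat.rec ⟨x, hx⟩ (fun _ p => (step p).1) k
  refine ⟨fun k => (st k).1, fun k => (step (st k)).2, ?_, fun k => ?_, fun k => ?_⟩
  · show ((⟨x, hx⟩ : U) : Fin n → R) = x
    rfl
  · show ((st (k + 1) : U) : Fin n → R) = _
    have hst : st (k + 1) = (step (st k)).1 := rfl
    rw [hst]
    exact hstep (st k)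
  · exact (st k).2

/-- Every element of a reachability submodule is reachable by a trajectory staying in `U` forever. -/
lemma reach_within {A : Matrix (Fin n) (Fin n) R} {B : Matrix (Fin n) (Fin m) R}
    {U : Submodule R (Fin n → R)} (hU : ABReachability A B U) (x : Fin n → R) (hx : x ∈ U) :
    ∃ (xs : ℕ → Fin n → R) (u : ℕ → Fin m → R) (r : ℕ), xs 0 = 0 ∧
      (∀ k, xs (k + 1) = A.mulVec (xs k) + B.mulVec (u k)) ∧ (∀ k, xs k ∈ U) ∧ xs r = x := by
  obtain ⟨r, u0, xs0, h0, hstep, hmem, hr⟩ := hU.2 x hx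
  obtain ⟨ys, v, hy0, hystep, hyU⟩ := exists_inv_traj hU.1 x hx
  refine ⟨fun k => if k ≤ r then xs0 k else ys (k - r), fun k => if k < r then u0 k else v (k - r),
    r, by simp [h0], fun k => ?_, fun k => ?_, by simp [hr]⟩
  · by_cases hk : k < r
    · simp only [if_pos (by omega : k + 1 ≤ r), if_pos (by omega : k ≤ r), if_pos hk]
      exact hstep k
    · have h1 : ¬ (k + 1 ≤ r) := by omega
      have h2 : k + 1 - r = (k - r) + 1 := by omega
      simp only [if_neg h1, if_neg hk, h2, hystep (k - r)]
      congr 1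
      by_cases hkr : k ≤ r
      · have : k = r := by omega
        simp [this, hr, ← hy0]
      · simp [if_neg hkr]
  · by_cases hk : k ≤ r
    · simp only [if_pos hk]
      rcases Nat.eq_zero_or_pos k with h | h
      · subst h; rw [h0]; exact U.zero_mem
      · exact hmem k h hk
    · simp only [if_neg hk]; exact hyU (k - r)

/-- Key lemma: every element of a reachability submodule lies in the span of the states of
a single loop. -/
lemma exists_loop_span [IsNoetherianRing R] {A : Matrix (Fin n) (Fin n) R}
    {B : Matrix (Fin n) (Fin m) R} {U : Submodule R (Fin n → R)} (hU : ABReachability A B U)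
    (x : Fin n → R) (hx : x ∈ U) :
    ∃ zs w r, IsLoop A B U zs w r ∧ x ∈ Submodule.span R (Set.range zs) := by
  obtain ⟨xs, u, r, h0, hstep, hmem, hr⟩ := reach_within hU x hx
  -- the chain of spans of initial segments stabilizes
  have hmono : Monotone (fun t => Submodule.span R (xs '' {k | k ≤ t})) := by
    intro a b hab
    exact Submodule.span_mono (Set.image_mono (fun k hk => le_trans hk hab))
  have hnoeth : IsNoetherian R (Fin n → R) := inferInstance
  obtain ⟨N, hN⟩ := (monotone_stabilizes_iff_noetherian.2 hnoeth)
    ⟨fun t => Submodule.span R (xs '' {k | k ≤ t}), hmono⟩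
  set t := max N r with ht
  have htN : N ≤ t := le_max_left _ _
  have htr : r ≤ t := le_max_right _ _
  have hWt : Submodule.span R (xs '' {k | k ≤ t + 1}) = Submodule.span R (xs '' {k | k ≤ t}) := by
    have h1 := hN (t + 1) (by omega : N ≤ t + 1)
    have h2 := hN t htN
    simp only [OrderHom.coe_mk] at h1 h2
    rw [← h1, ← h2]
  have hspan : Submodule.span R (xs '' {k | k ≤ t}) =
      Submodule.span R (Set.range (fun k : Fin (t + 1) => xs k)) := by
    congr 1
    ext y
    constructor
    · rintro ⟨k, hk, rfl⟩
      exact ⟨⟨k, Nat.lt_succ_of_le hk⟩, rfl⟩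
    · rintro ⟨k, rfl⟩
      exact ⟨(k : ℕ), Nat.lt_succ_iff.mp k.2, rfl⟩
  have hxt : xs (t + 1) ∈ Submodule.span R (Set.range (fun k : Fin (t + 1) => xs k)) := by
    rw [← hspan, ← hWt]
    exact Submodule.subset_span ⟨t + 1, by simp, rfl⟩
  rw [Submodule.mem_span_range_iff_exists_fun] at hxt
  obtain ⟨c, hc⟩ := hxt
  -- define the loop
  set zs : ℕ → Fin n → R :=
    fun j => (∑ k : Fin (t + 1), c k • xs (j + k - (t + 1))) - xs j with hzs
  set w : ℕ → Fin m → R :=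
    fun j => (∑ k : Fin (t + 1), c k • (if t + 1 ≤ j + (k : ℕ) then u (j + k - (t + 1)) else 0))
      - u j with hw
  have hz0 : zs 0 = 0 := by
    simp only [hzs]
    have : ∀ k : Fin (t + 1), (0 + (k : ℕ) - (t + 1)) = 0 := fun k => by omega
    simp only [this, h0, smul_zero, Finset.sum_const_zero, sub_zero]
  have hzstep : ∀ j, zs (j + 1) = A.mulVec (zs j) + B.mulVec (w j) := by
    intro j
    have hterm : ∀ k : Fin (t + 1), xs (j + 1 + (k : ℕ) - (t + 1)) =
        A.mulVec (xs (j + (k : ℕ) - (t + 1))) +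
          B.mulVec (if t + 1 ≤ j + (k : ℕ) then u (j + k - (t + 1)) else 0) := by
      intro k
      by_cases hk : t + 1 ≤ j + (k : ℕ)
      · have h1 : j + 1 + (k : ℕ) - (t + 1) = (j + (k : ℕ) - (t + 1)) + 1 := by omega
        rw [h1, if_pos hk, hstep]
      · have h1 : j + 1 + (k : ℕ) - (t + 1) = 0 := by omega
        have h2 : j + (k : ℕ) - (t + 1) = 0 := by omega
        rw [h1, h2, if_neg hk, h0, Matrix.mulVec_zero, Matrix.mulVec_zero, add_zero]
    simp only [hzs, hw]
    rw [← A.mulVecLin_apply, ← B.mulVecLin_apply, map_sub, map_sub, map_sum, map_sum]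
    simp only [_root_.map_smul, A.mulVecLin_apply, B.mulVecLin_apply]
    rw [Finset.sum_congr rfl (fun k _ => congrArg (c k • ·) (hterm k))]
    simp only [smul_add, Finset.sum_add_distrib, hstep j, Matrix.mulVec_smul]
    abel
  have hzU : ∀ j, zs j ∈ U := by
    intro j
    refine Submodule.sub_mem _ (Submodule.sum_mem _ fun k _ => Submodule.smul_mem _ _ ?_) (hmem j)
    exact hmem _
  have hzt1 : zs (t + 1) = 0 := by
    simp only [hzs]
    have h1 : ∀ k : Fin (t + 1), t + 1 + (k : ℕ) - (t + 1) = (k : ℕ) := fun k => by omega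
    simp only [h1]
    rw [sub_eq_zero, ← hc]
  -- truncate to get a genuine loop
  set zs' : ℕ → Fin n → R := fun j => if j ≤ t then zs j else 0 with hzs'
  set w' : ℕ → Fin m → R := fun j => if j ≤ t then w j else 0 with hw'
  have hloop : IsLoop A B U zs' w' (t + 1) := by
    refine ⟨by simp [hzs', hz0], fun j => ?_, fun j => ?_, fun j hj => ?_⟩
    · by_cases hj : j + 1 ≤ t
      · simp only [hzs', hw', if_pos hj, if_pos (by omega : j ≤ t)]
        exact hzstep j
      · by_cases hj' : j ≤ t
        · have hjt : j = t := by omega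
          have e1 : zs' (t + 1) = 0 := by rw [hzs']; exact if_neg (by omega)
          have e2 : zs' t = zs t := by rw [hzs']; exact if_pos (le_refl t)
          have e3 : w' t = w t := by rw [hw']; exact if_pos (le_refl t)
          rw [hjt, e1, e2, e3, ← hzt1]
          exact hzstep t
        · simp only [hzs', hw', if_neg hj, if_neg hj', if_neg (by omega : ¬ j + 1 ≤ t)]
          rw [Matrix.mulVec_zero, Matrix.mulVec_zero, add_zero]
    · by_cases hj : j ≤ t
      · simp only [hzs', if_pos hj]; exact hzU j
      · simp only [hzs', if_neg hj]; exact U.zero_mem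
    · constructor
      · simp [hzs', if_neg (by omega : ¬ j ≤ t)]
      · simp [hw', if_neg (by omega : ¬ j ≤ t)]
  -- show `x` is in the span of the states of the loop
  have hzmem : ∀ j, j ≤ t + 1 → zs j ∈ Submodule.span R (Set.range zs') := by
    intro j hj
    by_cases hjt : j ≤ t
    · have : zs j = zs' j := by simp [hzs', if_pos hjt]
      rw [this]; exact Submodule.subset_span ⟨j, rfl⟩
    · have : j = t + 1 := by omega
      rw [this, hzt1]; exact Submodule.zero_mem _
  have hxsmem : ∀ j, j ≤ t + 1 → xs j ∈ Submodule.span R (Set.range zs') := by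
    intro j
    induction j using Nat.strong_induction_on with
    | _ j ih =>
      intro hj
      rcases Nat.eq_zero_or_pos j with h | h
      · subst h; rw [h0]; exact Submodule.zero_mem _
      · have hrw : xs j = (∑ k : Fin (t + 1), c k • xs (j + k - (t + 1))) - zs j := by
          simp only [hzs]; abel
        rw [hrw]
        refine Submodule.sub_mem _ (Submodule.sum_mem _ fun k _ => Submodule.smul_mem _ _ ?_)
          (hzmem j hj)
        exact ih (j + (k : ℕ) - (t + 1)) (by omega) (by omega)
  exact ⟨zs', w', t + 1, hloop, hr ▸ hxsmem r (by omega)⟩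

/-- A single loop whose states span `U`. -/
lemma exists_spanning_loop [IsNoetherianRing R] {A : Matrix (Fin n) (Fin n) R}
    {B : Matrix (Fin n) (Fin m) R} {U : Submodule R (Fin n → R)} (hU : ABReachability A B U) :
    ∃ zs w r, IsLoop A B U zs w r ∧ U = Submodule.span R (Set.range zs) := by
  have hfg : U.FG := IsNoetherian.noetherian U
  obtain ⟨S, hS⟩ := hfg
  have key : ∀ S : Finset (Fin n → R), (↑S : Set (Fin n → R)) ⊆ ↑U →
      ∃ zs w r, IsLoop A B U zs w r ∧
        (↑S : Set (Fin n → R)) ⊆ ↑(Submodule.span R (Set.range zs)) := by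
    intro S
    classical
    induction S using Finset.induction_on with
    | empty =>
      intro _
      exact ⟨_, _, _, isLoop_zero A B U, by simp⟩
    | insert a S' hx ih =>
      intro hsub
      have ha : a ∈ U := hsub (Finset.mem_insert_self a S')
      obtain ⟨zs1, w1, r1, hl1, hsp1⟩ := ih (fun y hy => hsub (Finset.mem_insert_of_mem hy))
      obtain ⟨zs2, w2, r2, hl2, hsp2⟩ := exists_loop_span hU a ha
      obtain ⟨zs, w, hl, hz1, hz2⟩ := isLoop_concat hl1 hl2
      refine ⟨zs, w, r1 + r2, hl, ?_⟩
      intro y hy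
      rcases Finset.mem_insert.1 hy with h | h
      · subst h
        exact Submodule.span_le.2 (Set.range_subset_iff.2 hz2) hsp2
      · exact Submodule.span_le.2 (Set.range_subset_iff.2 hz1) (hsp1 h)
  obtain ⟨zs, w, r, hl, hsp⟩ := key S (by rw [← hS]; exact Submodule.subset_span)
  refine ⟨zs, w, r, hl, le_antisymm ?_ ?_⟩
  · rw [← hS]
    exact Submodule.span_le.2 hsp
  · exact Submodule.span_le.2 (Set.range_subset_iff.2 hl.2.2.1)

/-- Polynomial vector from coefficient sequence. -/
noncomputable def polyVec {p : ℕ} (c : ℕ → Fin p → R) (r : ℕ) : Fin p → R[X] :=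
  fun i => ∑ j ∈ Finset.range r, C (c j i) * X ^ j

lemma polyVec_coeff {p : ℕ} (c : ℕ → Fin p → R) (r : ℕ) (i : Fin p) (k : ℕ) :
    ((polyVec c r i).coeff k) = if k < r then c k i else 0 := by
  simp [polyVec, Polynomial.finset_sum_coeff, Polynomial.coeff_C_mul, Polynomial.coeff_X_pow,
    Finset.sum_ite_eq]

theorem stmt_12 [IsNoetherianRing R] (A : Matrix (Fin n) (Fin n) R)
    (B : Matrix (Fin n) (Fin m) R) (M : Submodule R (Fin n → R))
    (U : Submodule R (Fin n → R)) (hU : ABReachability A B U) (hUM : U ≤ M) :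
    ∃ p ∈ scrM A B M, U = Uf p.1 := by
  obtain ⟨xs, u, r, ⟨h0, hstep, hmem, hend⟩, hspan⟩ := exists_spanning_loop hU
  set f : Fin n → R[X] := polyVec (fun k => xs (r - 1 - k)) r with hf
  set g : Fin m → R[X] := polyVec (fun k => u (r - 1 - k)) r with hg
  have hcf : ∀ k, coeffVec f k = if k < r then xs (r - 1 - k) else 0 := by
    intro k; funext i
    simp only [coeffVec, hf, polyVec_coeff]
    by_cases h : k < r <;> simp [h]
  refine ⟨(f, g), ⟨?_, ?_⟩, ?_⟩
  · -- kerCond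
    funext i
    rw [Matrix.sub_mulVec, Matrix.smul_mulVec, Matrix.one_mulVec]
    ext k
    have hAf : ∀ k, (((A.map C).mulVec f) i).coeff k =
        (A.mulVec (if k < r then xs (r - 1 - k) else 0)) i := by
      intro k
      simp only [Matrix.mulVec, dotProduct, Matrix.map_apply,
        Polynomial.finset_sum_coeff, Polynomial.coeff_C_mul]
      rcases lt_or_ge k r with h | h
      · simp only [if_pos h]
        congr 1
        funext j
        rw [hf, polyVec_coeff, if_pos h]
      · simp only [if_neg (not_lt.2 h)]
        have : ∀ j, (f j).coeff k = 0 := fun j => by rw [hf, polyVec_coeff, if_neg (not_lt.2 h)]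
        simp [this]
    have hBg : (((B.map C).mulVec g) i).coeff k =
        (B.mulVec (if k < r then u (r - 1 - k) else 0)) i := by
      simp only [Matrix.mulVec, dotProduct, Matrix.map_apply,
        Polynomial.finset_sum_coeff, Polynomial.coeff_C_mul]
      rcases lt_or_ge k r with h | h
      · simp only [if_pos h]
        congr 1
        funext j
        rw [hg, polyVec_coeff, if_pos h]
      · simp only [if_neg (not_lt.2 h)]
        have : ∀ j, (g j).coeff k = 0 := fun j => by rw [hg, polyVec_coeff, if_neg (not_lt.2 h)]
        simp [this]
    rw [Pi.sub_apply, Polynomial.coeff_sub, hAf, hBg]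
    have hXf : ∀ k, (((X : R[X]) • f) i).coeff k = if 1 ≤ k ∧ k - 1 < r then xs (r - 1 - (k - 1)) i else 0 := by
      intro k
      have : ((X : R[X]) • f) i = X * f i := rfl
      rw [this]
      cases k with
      | zero => simp
      | succ k' =>
        rw [Polynomial.coeff_X_mul, hf, polyVec_coeff]
        by_cases h : k' < r <;> simp [h]
    rw [hXf]
    -- now pure vector computation
    rcases Nat.eq_zero_or_pos k with hk0 | hk1
    · subst hk0
      simp only [Nat.zero_lt_one, if_neg (by omega : ¬ (1 ≤ 0 ∧ 0 - 1 < r))]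
      rcases Nat.eq_zero_or_pos r with hr0 | hr1
      · simp [hr0, h0, Matrix.mulVec_zero]
      · rw [if_pos hr1, if_pos hr1]
        have h1 : r - 1 - 0 = r - 1 := by omega
        rw [h1]
        have h2 := hstep (r - 1)
        rw [(by omega : r - 1 + 1 = r), (hend r (le_refl r)).1] at h2
        have h3 := congrFun h2.symm i
        simp only [Pi.zero_apply, Pi.add_apply] at h3
        linear_combination -h3
    · rcases lt_or_ge k r with hkr | hkr
      · -- 1 ≤ k < r : interior step
        rw [if_pos ⟨hk1, by omega⟩, if_pos hkr, if_pos hkr]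
        have h2 := hstep (r - 1 - k)
        have h3 : r - 1 - k + 1 = r - 1 - (k - 1) := by omega
        rw [h3] at h2
        have := congrFun h2 i
        simp only [Pi.add_apply] at this
        linear_combination this
      · -- k ≥ r
        rw [if_neg (not_lt.2 hkr), if_neg (not_lt.2 hkr), Matrix.mulVec_zero, Matrix.mulVec_zero]
        by_cases hk : 1 ≤ k ∧ k - 1 < r
        · -- k = r : top coefficient is xs 0 = 0
          have : r - 1 - (k - 1) = 0 := by omega
          rw [if_pos hk, this, h0]
          simp
        · rw [if_neg hk]; simp
  · -- coefficients in M
    intro k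
    rw [hcf k]
    by_cases h : k < r
    · rw [if_pos h]; exact hUM (hmem _)
    · rw [if_neg h]; exact M.zero_mem
  · -- U = Uf f
    rw [hspan, Uf]
    apply le_antisymm
    · apply Submodule.span_le.2
      rintro y ⟨j, rfl⟩
      rcases lt_or_ge j r with h | h
      · have h1 : r - 1 - (r - 1 - j) = j := by omega
        have h2 : r - 1 - j < r := by omega
        have : xs j = coeffVec f (r - 1 - j) := by rw [hcf, if_pos h2, h1]
        rw [this]
        exact Submodule.subset_span ⟨r - 1 - j, rfl⟩
      · rw [(hend j h).1]
        exact Submodule.zero_mem _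
    · apply Submodule.span_le.2
      rintro y ⟨k, rfl⟩
      rw [hcf k]
      by_cases h : k < r
      · rw [if_pos h]; exact Submodule.subset_span ⟨r - 1 - k, rfl⟩
      · rw [if_neg h]; exact Submodule.zero_mem _
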